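/- Let {f_i}_{i∈I} be a finite family of vectors in a vector space, M ∈ ℕ, and let {I_1, …, I_M} be a partition of I with property (MD). If k ∈ I_p and f_k = ∑_{l∈I_p, l≠k} α_l f_l for some scalars α_l, then f_k lies in span{f_i : i ∈ I_j} for every 1 ≤ j ≤ M. -/

import Mathlib

/-- Property (MD) of a partition (see the paper of Bodmann, Casazza, Paulsen, Speegle). -/
def HasMD (K : Type*) {X : Type*} [Field K] [AddCommGroup X] [Module K X]
    {I : Type*} (f : I → X) (M : ℕ) (P : Fin M → Set I) : Prop :=
  ∀ Q : Fin M → Set I,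
    (⋃ j, Q j) = Set.univ → Pairwise (Function.onFun Disjoint Q) →
    (∀ j, Module.finrank K (Submodule.span K (f '' P j)) ≤
        Module.finrank K (Submodule.span K (f '' Q j))) →
    ∀ j, Module.finrank K (Submodule.span K (f '' P j)) =
        Module.finrank K (Submodule.span K (f '' Q j))

/-- If a partition `{I_j}` of `I` has property (MD), `k ∈ I_p`, and `f k`
is a linear combination of the other vectors indexed by `I_p`, then `f k` lies in the
span of every block of the partition. -/
theorem MD_redundant_mem_span
    {K X : Type*} [Field K] [AddCommGroup X] [Module K X] [FiniteDimensional K X]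
    {I : Type*} [Fintype I] (f : I → X) (M : ℕ) (hM : 0 < M)
    (P : Fin M → Set I)
    (hpart : (⋃ j, P j) = Set.univ ∧ Pairwise (Function.onFun Disjoint P))
    (hMD : HasMD K f M P)
    (p : Fin M) (k : I) (hk : k ∈ P p)
    (hdep : f k ∈ Submodule.span K (f '' (P p \ {k}))) :
    ∀ j, f k ∈ Submodule.span K (f '' P j) := by
  obtain ⟨hPu, hPd⟩ := hpart
  intro j
  by_cases hjp : j = p
  · subst hjp; exact Submodule.subset_span ⟨k, hk, rfl⟩
  -- move k from block p to block j
  set Q : Fin M → Set I := fun i =>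
    if i = p then P p \ {k} else if i = j then P j ∪ {k} else P i with hQdef
  have hQp : Q p = P p \ {k} := by simp [hQdef]
  have hQj : Q j = P j ∪ {k} := by simp [hQdef, hjp]
  have hQo : ∀ i, i ≠ p → i ≠ j → Q i = P i := by
    intro i h1 h2; simp [hQdef, h1, h2]
  -- k is not in any other block
  have hknot : ∀ i, i ≠ p → k ∉ P i := by
    intro i hi hki
    exact (hPd hi).le_bot ⟨hki, hk⟩
  -- union
  have hQu : (⋃ i, Q i) = Set.univ := by
    apply Set.eq_univ_of_forall
    intro x
    have hx : x ∈ ⋃ i, P i := hPu ▸ Set.mem_univ x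
    obtain ⟨i, hi⟩ := Set.mem_iUnion.mp hx
    by_cases hxk : x = k
    · exact Set.mem_iUnion.mpr ⟨j, hQj ▸ Or.inr (by simp [hxk])⟩
    · by_cases hip : i = p
      · exact Set.mem_iUnion.mpr ⟨p, hQp ▸ ⟨hip ▸ hi, hxk⟩⟩
      · by_cases hij : i = j
        · exact Set.mem_iUnion.mpr ⟨j, hQj ▸ Or.inl (hij ▸ hi)⟩
        · exact Set.mem_iUnion.mpr ⟨i, (hQo i hip hij) ▸ hi⟩
  -- disjoint
  have hQd : Pairwise (Function.onFun Disjoint Q) := by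
    intro a b hab
    have base : Disjoint (P a) (P b) := hPd hab
    unfold Function.onFun
    by_cases hap : a = p
    · subst hap
      rw [hQp]
      by_cases hbj : b = j
      · subst hbj
        rw [hQj, Set.disjoint_union_right]
        exact ⟨base.mono_left Set.diff_subset, by
          simp only [Set.disjoint_singleton_right, Set.mem_diff, Set.mem_singleton_iff]
          tauto⟩
      · rw [hQo b (Ne.symm hab) hbj]
        exact base.mono_left Set.diff_subset
    · by_cases haj : a = j
      · subst haj
        rw [hQj]
        by_cases hbp : b = p
        · subst hbp
          rw [hQp, Set.disjoint_union_left]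
          exact ⟨base.mono_right Set.diff_subset, by
            simp only [Set.disjoint_singleton_left, Set.mem_diff, Set.mem_singleton_iff]
            tauto⟩
        · rw [hQo b hbp (Ne.symm hab), Set.disjoint_union_left]
          exact ⟨base, Set.disjoint_singleton_left.mpr (hknot b hbp)⟩
      · rw [hQo a hap haj]
        by_cases hbp : b = p
        · subst hbp; rw [hQp]; exact base.mono_right Set.diff_subset
        · by_cases hbj : b = j
          · subst hbj
            rw [hQj, Set.disjoint_union_right]
            exact ⟨base, Set.disjoint_singleton_right.mpr (hknot a hap)⟩
          · rw [hQo b hbp hbj]; exact base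
  -- spans
  have hspanp : Submodule.span K (f '' Q p) = Submodule.span K (f '' P p) := by
    rw [hQp]
    apply le_antisymm
    · exact Submodule.span_mono (Set.image_mono (f := f) Set.diff_subset)
    · rw [Submodule.span_le]
      rintro _ ⟨i, hi, rfl⟩
      by_cases hik : i = k
      · subst hik; exact hdep
      · exact Submodule.subset_span ⟨i, ⟨hi, hik⟩, rfl⟩
  have hle : ∀ i, Module.finrank K (Submodule.span K (f '' P i)) ≤
      Module.finrank K (Submodule.span K (f '' Q i)) := by
    intro i
    by_cases hip : i = p
    · subst hip; rw [hspanp]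
    · by_cases hij : i = j
      · subst hij
        exact Submodule.finrank_mono (Submodule.span_mono
          (Set.image_mono (f := f) (hQj ▸ Set.subset_union_left)))
      · rw [hQo i hip hij]
  have heq := hMD Q hQu hQd hle j
  have hsub : Submodule.span K (f '' P j) ≤ Submodule.span K (f '' Q j) :=
    Submodule.span_mono (Set.image_mono (f := f) (hQj ▸ Set.subset_union_left))
  have hEq : Submodule.span K (f '' P j) = Submodule.span K (f '' Q j) :=
    Submodule.eq_of_le_of_finrank_eq hsub heq
  rw [hEq, hQj]
  exact Submodule.subset_span ⟨k, Or.inr rfl, rfl⟩
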